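/- For λ ∈ ℂ with Im λ < 0, there exists a nontrivial outgoing solution ψ ∈ ℂ^A of Uψ = e^{−iλ}ψ (i.e., a solution with ψ(a_{j,k}^♭) = 0 for all k ≥ 0 and all j) if and only if e^{−iλ} is an eigenvalue of the finite matrix E = χ_int U χ_int*. -/

import Mathlib

/-- For `λ ∈ ℂ` with `Im λ < 0`, there exists a nontrivial outgoing
solution `ψ ∈ ℂ^A` of `Uψ = e^{−iλ}ψ` (i.e. `ψ` vanishes on all incoming tail
edges `a_{j,k}^♭`) if and only if `e^{−iλ}` is an eigenvalue of the finite
matrix `E = χ_int U χ_int*`.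

Setup: `Aint` is the finite internal edge set, `flat j k = a_{j,k}^♭` (k ≥ 0),
`sharp j l = a_{j,l+1}^♯` (enumerating the outgoing edges `a_{j,l}^♯`, l ≥ 1);
the tail edges are pairwise distinct and disjoint from `Aint`, every edge is
internal or a tail edge, `U` satisfies the free-walk relations (Assumption 1)
on tails, and the value of `Uψ` on internal edges and on the first outgoing
edges `a_{j,1}^♯` depends only on `ψ` restricted to `Aint ∪ {a_{j,0}^♭}`.
`E` is the compression of `U` to `ℂ^{Aint}`. -/
theorem outgoing_solution_iff_eigenvalue_of_E
    {A : Type*} [DecidableEq A] (N : ℕ) (Aint : Finset A)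
    (flat sharp : Fin N → ℕ → A)
    (hdisj_flat : ∀ j k, flat j k ∉ Aint)
    (hdisj_sharp : ∀ j l, sharp j l ∉ Aint)
    (hinj : Function.Injective
      (Sum.elim (fun q : Fin N × ℕ => flat q.1 q.2)
                (fun q : Fin N × ℕ => sharp q.1 q.2)))
    (hcover : ∀ a : A, a ∉ Aint → (∃ j k, a = flat j k) ∨ (∃ j l, a = sharp j l))
    (U : (A → ℂ) →ₗ[ℂ] (A → ℂ))
    (hUflat : ∀ (ψ : A → ℂ) (j : Fin N) (k : ℕ), U ψ (flat j k) = ψ (flat j (k + 1)))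
    (hUsharp : ∀ (ψ : A → ℂ) (j : Fin N) (l : ℕ), U ψ (sharp j (l + 1)) = ψ (sharp j l))
    (hlocal : ∀ ψ φ : A → ℂ, (∀ a ∈ Aint, ψ a = φ a) → (∀ j, ψ (flat j 0) = φ (flat j 0)) →
      (∀ a ∈ Aint, U ψ a = U φ a) ∧ (∀ j, U ψ (sharp j 0) = U φ (sharp j 0)))
    (E : (↥Aint → ℂ) →ₗ[ℂ] (↥Aint → ℂ))
    (hE : ∀ (u : ↥Aint → ℂ) (a : ↥Aint),
      E u a = U (fun b => if h : b ∈ Aint then u ⟨b, h⟩ else 0) a)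
    (lam : ℂ) (hlam : lam.im < 0) :
    (∃ ψ : A → ℂ, ψ ≠ 0 ∧ (∀ j k, ψ (flat j k) = 0) ∧
        U ψ = Complex.exp (-(Complex.I * lam)) • ψ) ↔
    (∃ u : ↥Aint → ℂ, u ≠ 0 ∧ E u = Complex.exp (-(Complex.I * lam)) • u) := by
  classical
  set μ := Complex.exp (-(Complex.I * lam)) with hμdef
  have hμ : μ ≠ 0 := Complex.exp_ne_zero _
  have hsharp_inj : ∀ j l j' l', sharp j l = sharp j' l' → j = j' ∧ l = l' := by
    intro j l j' l' h
    have h2 := hinj (a₁ := Sum.inr (j, l)) (a₂ := Sum.inr (j', l')) h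
    simpa [Prod.ext_iff] using h2
  have hfs : ∀ j k j' l', flat j k ≠ sharp j' l' := by
    intro j k j' l' h
    have h2 := hinj (a₁ := Sum.inl (j, k)) (a₂ := Sum.inr (j', l')) h
    simp at h2
  constructor
  · rintro ⟨ψ, hψ0, hψflat, hψeq⟩
    have hψeq' : ∀ a, U ψ a = μ * ψ a := fun a => congrFun hψeq a
    refine ⟨fun a => ψ a.1, ?_, ?_⟩
    · intro h
      have hzero : ∀ a ∈ Aint, ψ a = 0 := by
        intro a ha
        have := congrFun h ⟨a, ha⟩
        simpa using this
      -- ψ vanishes on sharp edges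
      have hU0 : ∀ j, U ψ (sharp j 0) = U 0 (sharp j 0) :=
        (hlocal ψ 0 (fun a ha => hzero a ha) (fun j => hψflat j 0)).2
      have hsharp0 : ∀ j, ψ (sharp j 0) = 0 := by
        intro j
        have h1 : μ * ψ (sharp j 0) = 0 := by
          rw [← hψeq', hU0 j, map_zero]; rfl
        exact (mul_eq_zero.mp h1).resolve_left hμ
      have hsharpall : ∀ l j, ψ (sharp j l) = 0 := by
        intro l
        induction l with
        | zero => exact hsharp0
        | succ l ih =>
          intro j
          have h1 : μ * ψ (sharp j (l + 1)) = ψ (sharp j l) := by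
            rw [← hψeq', hUsharp]
          rw [ih j] at h1
          exact (mul_eq_zero.mp h1).resolve_left hμ
      apply hψ0
      funext a
      by_cases ha : a ∈ Aint
      · exact hzero a ha
      · rcases hcover a ha with ⟨j, k, rfl⟩ | ⟨j, l, rfl⟩
        · exact hψflat j k
        · exact hsharpall l j
    · funext a
      have hloc := hlocal (fun b => if h : b ∈ Aint then ψ b else 0) ψ
        (by intro b hb; simp [hb])
        (by intro j; simp [hdisj_flat j 0, hψflat j 0])
      have : E (fun b : ↥Aint => ψ b.1) a
          = U (fun b => if h : b ∈ Aint then ψ b else 0) a := hE _ _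
      rw [this, hloc.1 a.1 a.2, hψeq']
      rfl
  · rintro ⟨u, hu0, huE⟩
    set ext : A → ℂ := fun b => if h : b ∈ Aint then u ⟨b, h⟩ else 0 with hext
    set c : Fin N → ℂ := fun j => U ext (sharp j 0) with hc
    set ψ : A → ℂ := fun a =>
      if h : a ∈ Aint then u ⟨a, h⟩
      else if h2 : ∃ q : Fin N × ℕ, a = sharp q.1 q.2 then
        μ⁻¹ ^ (h2.choose.2 + 1) * c h2.choose.1
      else 0 with hψdef
    have hψint : ∀ a (h : a ∈ Aint), ψ a = u ⟨a, h⟩ := by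
      intro a h; simp [hψdef, h]
    have hψflat : ∀ j k, ψ (flat j k) = 0 := by
      intro j k
      have h1 : flat j k ∉ Aint := hdisj_flat j k
      have h2 : ¬ ∃ q : Fin N × ℕ, flat j k = sharp q.1 q.2 := by
        rintro ⟨q, hq⟩; exact hfs j k q.1 q.2 hq
      simp only [hψdef]
      rw [dif_neg h1, dif_neg h2]
    have hψsharp : ∀ j l, ψ (sharp j l) = μ⁻¹ ^ (l + 1) * c j := by
      intro j l
      have h1 : sharp j l ∉ Aint := hdisj_sharp j l
      have h2 : ∃ q : Fin N × ℕ, sharp j l = sharp q.1 q.2 := ⟨(j, l), rfl⟩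
      have hch := h2.choose_spec
      obtain ⟨hj, hl⟩ := hsharp_inj j l h2.choose.1 h2.choose.2 hch
      simp only [hψdef, dif_neg h1, dif_pos h2]
      rw [← hj, ← hl]
    have hψext : ∀ a ∈ Aint, ψ a = ext a := by
      intro a h; simp [hψint a h, hext, h]
    have hψext0 : ∀ j, ψ (flat j 0) = ext (flat j 0) := by
      intro j; simp [hψflat j 0, hext, hdisj_flat j 0]
    have hloc := hlocal ψ ext hψext hψext0
    refine ⟨ψ, ?_, hψflat, ?_⟩
    · intro h
      apply hu0
      funext a
      have := congrFun h a.1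
      rw [hψint a.1 a.2] at this
      simpa using this
    · funext a
      show U ψ a = μ * ψ a
      by_cases ha : a ∈ Aint
      · rw [hloc.1 a ha]
        have h1 : U ext a = E u ⟨a, ha⟩ := (hE u ⟨a, ha⟩).symm
        rw [h1, huE, hψint a ha]
        rfl
      · rcases hcover a ha with ⟨j, k, rfl⟩ | ⟨j, l, rfl⟩
        · rw [hUflat, hψflat, hψflat, mul_zero]
        · cases l with
          | zero =>
            rw [hloc.2 j, hψsharp j 0]
            show c j = μ * (μ⁻¹ ^ (0 + 1) * c j)
            rw [zero_add, pow_one, ← mul_assoc, mul_inv_cancel₀ hμ, one_mul]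
          | succ l =>
            rw [hUsharp, hψsharp, hψsharp]
            field_simp
            linear_combination (-(μ⁻¹ ^ (l + 1) * c j)) * mul_inv_cancel₀ hμ
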